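/- Let M be a symmetric N×N integer matrix with all entries bounded in absolute value by B. Then every nonzero eigenvalue of M has absolute value at least (B·N)^(−N). -/

import Mathlib

open Polynomial Matrix

lemma my_charpoly_conj {n : Type*} [Fintype n] [DecidableEq n] {R : Type*} [CommRing R]
    (U V D : Matrix n n R) (hUV : U * V = 1) :
    (U * D * V).charpoly = D.charpoly := by
  unfold Matrix.charpoly
  have h : charmatrix (U * D * V) = U.map C * charmatrix D * V.map C := by
    unfold charmatrix
    rw [mul_sub, sub_mul]
    congr 1
    · rw [scalar_apply, ← scalar_apply (n := n) X, mul_assoc,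
        Matrix.scalar_commute X (fun r => Commute.all _ _) (V.map C), ← mul_assoc,
        ← Matrix.map_mul, hUV]
      simp
    · simp [Matrix.map_mul]
  rw [h, det_mul, det_mul, mul_right_comm,
    show (U.map C).det * (V.map C).det = 1 by
      rw [← det_mul, ← Matrix.map_mul, hUV]; simp,
    one_mul]

lemma my_charpoly_eq {N : ℕ} (A : Matrix (Fin N) (Fin N) ℝ) (hA : A.IsHermitian) :
    A.charpoly = ∏ i, (X - C (hA.eigenvalues i)) := by
  have hU := (Matrix.mem_unitaryGroup_iff).mp (hA.eigenvectorUnitary).2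
  have := my_charpoly_conj (hA.eigenvectorUnitary : Matrix (Fin N) (Fin N) ℝ)
    (star (hA.eigenvectorUnitary : Matrix (Fin N) (Fin N) ℝ))
    (Matrix.diagonal (RCLike.ofReal ∘ hA.eigenvalues)) hU
  rw [← Unitary.conjStarAlgAut_apply (S := ℝ), ← hA.spectral_theorem] at this
  rw [this, Matrix.charpoly_of_upperTriangular _ (Matrix.blockTriangular_diagonal _)]
  simp

attribute [local instance] Matrix.linftyOpNormedRing Matrix.linftyOpNormedAlgebra
  Matrix.linfty_opNormOneClass

lemma my_eig_bound {N : ℕ} (B : ℤ) (M : Matrix (Fin N) (Fin N) ℤ) (hB : ∀ i j, |M i j| ≤ B)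
    (hM : (M.map (Int.cast : ℤ → ℝ)).IsHermitian) (hN : 0 < N) (j : Fin N) :
    |hM.eigenvalues j| ≤ (B : ℝ) * N := by
  have : Nonempty (Fin N) := ⟨⟨0, hN⟩⟩
  have hc : CompleteSpace (Matrix (Fin N) (Fin N) ℝ) := FiniteDimensional.complete ℝ _
  set A := M.map (Int.cast : ℤ → ℝ) with hA
  have hmem := hM.eigenvalues_mem_spectrum_real j
  have h1 : |hM.eigenvalues j| ≤ ‖A‖ := by
    simpa [Real.norm_eq_abs] using spectrum.norm_le_norm_of_mem hmem
  refine h1.trans ?_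
  set b : NNReal := ‖(B : ℝ)‖₊ with hb
  have hBnn : (0:ℤ) ≤ B := le_trans (abs_nonneg _) (hB ⟨0,hN⟩ ⟨0,hN⟩)
  have hbB : (b : ℝ) = (B : ℝ) := by
    rw [hb, coe_nnnorm, Real.norm_eq_abs, abs_of_nonneg (by exact_mod_cast hBnn)]
  have h2 : ‖A‖₊ ≤ N * b := by
    rw [Matrix.linfty_opNNNorm_def]
    refine Finset.sup_le fun i _ => ?_
    calc ∑ k, ‖A i k‖₊ ≤ ∑ _k : Fin N, b := by
          refine Finset.sum_le_sum fun k _ => ?_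
          rw [← NNReal.coe_le_coe, coe_nnnorm, hbB, Real.norm_eq_abs, hA,
            Matrix.map_apply, ← Int.cast_abs]
          exact_mod_cast hB i k
      _ = N * b := by simp [mul_comm]
  calc ‖A‖ ≤ ((N * b : NNReal) : ℝ) := by exact_mod_cast h2
    _ = (B:ℝ) * N := by push_cast [hbB]; ring

/-- A symmetric N×N integer matrix with entries bounded by B in absolute value
has every nonzero eigenvalue of absolute value at least (B·N)^(−N). -/
theorem stmt_0 (N : ℕ) (B : ℤ) (M : Matrix (Fin N) (Fin N) ℤ)
    (hsym : M.IsSymm) (hB : ∀ i j, |M i j| ≤ B)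
    (hM : (M.map (Int.cast : ℤ → ℝ)).IsHermitian) :
    ∀ i, hM.eigenvalues i ≠ 0 →
      ((B : ℝ) * (N : ℝ)) ^ (-(N : ℤ)) ≤ |hM.eigenvalues i| := by
  intro i hi
  have hN : 0 < N := i.pos
  set A := M.map (Int.cast : ℤ → ℝ) with hA
  set lam := hM.eigenvalues with hlam
  -- B*N ≥ 1
  have hle : |lam i| ≤ (B : ℝ) * N := my_eig_bound B M hB hM hN i
  have hBNpos : 0 < (B : ℝ) * N := lt_of_lt_of_le (abs_pos.mpr hi) hle
  have hBpos : (0:ℤ) < B := by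
    by_contra h
    push_neg at h
    have : (B:ℝ) ≤ 0 := by exact_mod_cast h
    nlinarith [(Nat.cast_pos (α := ℝ)).mpr hN]
  have hBN1 : (1:ℝ) ≤ (B : ℝ) * N := by
    have h1 : (1:ℝ) ≤ (B:ℝ) := by exact_mod_cast hBpos
    have h2 : (1:ℝ) ≤ (N:ℝ) := by exact_mod_cast hN
    nlinarith
  -- the set of nonzero eigenvalues
  set S := Finset.univ.filter (fun j => lam j ≠ 0) with hS
  have hiS : i ∈ S := by simp [hS, hi]
  -- factor charpoly
  have hcp : A.charpoly = ∏ j, (Polynomial.X - Polynomial.C (lam j)) := my_charpoly_eq A hM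
  set k := (Finset.univ.filter (fun j => ¬ lam j ≠ 0)).card with hk
  have hfac : A.charpoly = (∏ j ∈ S, (Polynomial.X - Polynomial.C (lam j))) * Polynomial.X ^ k := by
    rw [hcp, ← Finset.prod_filter_mul_prod_filter_not Finset.univ (fun j => lam j ≠ 0)]
    congr 1
    rw [Finset.prod_congr rfl (fun j hj => ?_), Finset.prod_const, hk]
    simp only [Finset.mem_filter, not_not] at hj
    rw [hj.2]
    simp
  -- the k-th coefficient is the product of (-eigenvalues) over S, and is an integer
  have hcoeff : (A.charpoly).coeff k = ∏ j ∈ S, (-(lam j)) := by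
    have h0 := Polynomial.coeff_mul_X_pow (∏ j ∈ S, (Polynomial.X - Polynomial.C (lam j))) k 0
    rw [zero_add] at h0
    rw [hfac, h0, Polynomial.coeff_zero_eq_eval_zero, Polynomial.eval_prod]
    simp
  have hint : A.charpoly = (M.charpoly).map (Int.castRingHom ℝ) := by
    exact Matrix.charpoly_map M (Int.castRingHom ℝ)
  have hcoeffZ : ((M.charpoly.coeff k : ℤ) : ℝ) = ∏ j ∈ S, (-(lam j)) := by
    rw [← hcoeff, hint, Polynomial.coeff_map]
    simp
  have hprodne : (∏ j ∈ S, (-(lam j))) ≠ 0 := by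
    refine Finset.prod_ne_zero_iff.mpr fun j hj => ?_
    simp only [hS, Finset.mem_filter] at hj
    simpa using hj.2
  have hZne : M.charpoly.coeff k ≠ 0 := by
    intro h
    rw [h] at hcoeffZ
    exact hprodne (by simpa using hcoeffZ.symm)
  have hone : (1:ℝ) ≤ |∏ j ∈ S, (-(lam j))| := by
    rw [← hcoeffZ, ← Int.cast_abs]
    exact_mod_cast Int.one_le_abs hZne
  have hone' : (1:ℝ) ≤ ∏ j ∈ S, |lam j| := by
    calc (1:ℝ) ≤ |∏ j ∈ S, (-(lam j))| := hone
      _ = ∏ j ∈ S, |lam j| := by rw [Finset.abs_prod]; exact Finset.prod_congr rfl fun j _ => abs_neg _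
  -- bound the product of the other eigenvalues
  have hsplit : ∏ j ∈ S, |lam j| = |lam i| * ∏ j ∈ S.erase i, |lam j| :=
    (Finset.mul_prod_erase S _ hiS).symm
  have hrest : ∏ j ∈ S.erase i, |lam j| ≤ ((B:ℝ) * N) ^ N := by
    calc ∏ j ∈ S.erase i, |lam j| ≤ ∏ _j ∈ S.erase i, ((B:ℝ) * N) :=
          Finset.prod_le_prod (fun j _ => abs_nonneg _)
            (fun j _ => my_eig_bound B M hB hM hN j)
      _ = ((B:ℝ) * N) ^ (S.erase i).card := by rw [Finset.prod_const]
      _ ≤ ((B:ℝ) * N) ^ N := by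
          refine pow_le_pow_right₀ hBN1 ?_
          calc (S.erase i).card ≤ S.card := Finset.card_le_card (Finset.erase_subset _ _)
            _ ≤ (Finset.univ : Finset (Fin N)).card := Finset.card_le_card (Finset.filter_subset _ _)
            _ = N := by simp
  have hmain : 1 ≤ |lam i| * ((B:ℝ) * N) ^ N := by
    calc (1:ℝ) ≤ ∏ j ∈ S, |lam j| := hone'
      _ = |lam i| * ∏ j ∈ S.erase i, |lam j| := hsplit
      _ ≤ |lam i| * ((B:ℝ) * N) ^ N := by
          exact mul_le_mul_of_nonneg_left hrest (abs_nonneg _)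
  have hpow : 0 < ((B:ℝ) * N) ^ N := pow_pos hBNpos N
  rw [_root_.zpow_neg, zpow_natCast, ← one_div, div_le_iff₀ hpow]
  linarith [hmain]
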